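/- Under the conditions of the basic principal-angle perturbation theorem, with additionally m = 2n, the perturbed leverage scores satisfy the two-sided bound 1 − (sin θ_n √ℓ_j + cos θ₁ √(1−ℓ_j))² ≤ ℓ̃_j ≤ (cos θ₁ √ℓ_j + sin θ_n √(1−ℓ_j))² for each j. -/

import Mathlib

open Matrix

/-- Spectral (two-)norm of a real rectangular matrix. -/
noncomputable def spec {m n : ℕ} (A : Matrix (Fin m) (Fin n) ℝ) : ℝ :=
  ‖LinearMap.toContinuousLinearMap (Matrix.toEuclideanLin A)‖

/-- Frobenius norm. -/
noncomputable def frob {m n : ℕ} (A : Matrix (Fin m) (Fin n) ℝ) : ℝ :=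
  Real.sqrt (∑ i, ∑ j, (A i j) ^ 2)

/-- Leverage score: squared Euclidean norm of the j-th row. -/
noncomputable def lev {m n : ℕ} (Q : Matrix (Fin m) (Fin n) ℝ) (j : Fin m) : ℝ :=
  ∑ k, (Q j k) ^ 2

/-- Euclidean norm of the j-th row. -/
noncomputable def rnorm {m n : ℕ} (A : Matrix (Fin m) (Fin n) ℝ) (j : Fin m) : ℝ :=
  Real.sqrt (∑ k, (A j k) ^ 2)

/-- Moore–Penrose inverse of a full column rank matrix. -/
noncomputable def pinv {m n : ℕ} (A : Matrix (Fin m) (Fin n) ℝ) : Matrix (Fin n) (Fin m) ℝ :=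
  (Aᵀ * A)⁻¹ * Aᵀ

namespace Stmt6Aux

lemma dot_self_nonneg' {k : ℕ} (v : Fin k → ℝ) : 0 ≤ v ⬝ᵥ v :=
  Finset.sum_nonneg fun _ _ => mul_self_nonneg _

lemma dot_sq_le {k : ℕ} (v w : Fin k → ℝ) : (v ⬝ᵥ w) ^ 2 ≤ (v ⬝ᵥ v) * (w ⬝ᵥ w) := by
  have h := Finset.sum_mul_sq_le_sq_mul_sq Finset.univ v w
  simpa [dotProduct, pow_two] using h

lemma dmv {a b : ℕ} (A : Matrix (Fin a) (Fin b) ℝ) (x : Fin b → ℝ) (y : Fin a → ℝ) :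
    (A *ᵥ x) ⬝ᵥ y = x ⬝ᵥ (Aᵀ *ᵥ y) := by
  rw [dotProduct_comm, dotProduct_mulVec, ← Matrix.mulVec_transpose, dotProduct_comm]

lemma cancel_left {k l : ℕ} {V W : Matrix (Fin k) (Fin k) ℝ} (h : W * V = 1)
    (X : Matrix (Fin k) (Fin l) ℝ) : W * (V * X) = X := by
  rw [← Matrix.mul_assoc, h, Matrix.one_mul]

lemma diag_sq {n : ℕ} (f : Fin n → ℝ) :
    diagonal f * diagonal f = diagonal (fun i => f i ^ 2) := by
  rw [diagonal_mul_diagonal]; ext i k; simp [Matrix.diagonal_apply, pow_two]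

lemma sandwich {n : ℕ} (V : Matrix (Fin n) (Fin n) ℝ) (hV2 : V * Vᵀ = 1) (d : Fin n → ℝ) :
    1 - V * diagonal d * Vᵀ = V * diagonal (fun i => 1 - d i) * Vᵀ := by
  have : diagonal (fun i : Fin n => (1:ℝ) - d i) = 1 - diagonal d := by
    rw [← diagonal_one, diagonal_sub]
  rw [this, Matrix.mul_sub, Matrix.sub_mul, Matrix.mul_one, hV2]

lemma svd_gram {k : ℕ} (U V : Matrix (Fin k) (Fin k) ℝ) (g : Fin k → ℝ)
    (hV1 : Vᵀ * V = 1) :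
    (U * diagonal g * Vᵀ) * (V * diagonal g * Uᵀ) = U * diagonal (fun i => g i ^ 2) * Uᵀ := by
  calc (U * diagonal g * Vᵀ) * (V * diagonal g * Uᵀ)
      = U * (diagonal g * ((Vᵀ * V) * (diagonal g * Uᵀ))) := by
        simp only [Matrix.mul_assoc]
    _ = U * (diagonal g * (diagonal g * Uᵀ)) := by rw [hV1, Matrix.one_mul]
    _ = U * ((diagonal g * diagonal g) * Uᵀ) := by rw [Matrix.mul_assoc]
    _ = U * diagonal (fun i => g i ^ 2) * Uᵀ := by rw [diag_sq, Matrix.mul_assoc]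

lemma gram_bound {a b : ℕ} (M : Matrix (Fin a) (Fin b) ℝ) (V : Matrix (Fin b) (Fin b) ℝ)
    (d : Fin b → ℝ) (c : ℝ) (hV2 : V * Vᵀ = 1)
    (hG : Mᵀ * M = V * diagonal d * Vᵀ) (hd : ∀ i, d i ≤ c) (z : Fin b → ℝ) :
    (M *ᵥ z) ⬝ᵥ (M *ᵥ z) ≤ c * (z ⬝ᵥ z) := by
  have h1 : (M *ᵥ z) ⬝ᵥ (M *ᵥ z) = z ⬝ᵥ ((Mᵀ * M) *ᵥ z) := by
    rw [dmv, mulVec_mulVec]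
  have h2 : z ⬝ᵥ ((V * diagonal d * Vᵀ) *ᵥ z) =
      (Vᵀ *ᵥ z) ⬝ᵥ (diagonal d *ᵥ (Vᵀ *ᵥ z)) := by
    rw [← mulVec_mulVec, ← mulVec_mulVec, dotProduct_comm, dmv, dotProduct_comm]
  have h3 : (Vᵀ *ᵥ z) ⬝ᵥ (diagonal d *ᵥ (Vᵀ *ᵥ z)) ≤ c * ((Vᵀ *ᵥ z) ⬝ᵥ (Vᵀ *ᵥ z)) := by
    rw [dotProduct, dotProduct, Finset.mul_sum]
    refine Finset.sum_le_sum fun i _ => ?_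
    rw [mulVec_diagonal]
    nlinarith [hd i, mul_self_nonneg ((Vᵀ *ᵥ z) i)]
  have h4 : (Vᵀ *ᵥ z) ⬝ᵥ (Vᵀ *ᵥ z) = z ⬝ᵥ z := by
    rw [dmv, transpose_transpose, mulVec_mulVec, hV2, one_mulVec]
  rw [h1, hG, h2]
  calc (Vᵀ *ᵥ z) ⬝ᵥ (diagonal d *ᵥ (Vᵀ *ᵥ z)) ≤ c * ((Vᵀ *ᵥ z) ⬝ᵥ (Vᵀ *ᵥ z)) := h3
    _ = c * (z ⬝ᵥ z) := by rw [h4]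

lemma adjoint_bound {a b : ℕ} (M : Matrix (Fin a) (Fin b) ℝ) (c : ℝ) (hc : 0 ≤ c)
    (hM : ∀ z : Fin b → ℝ, (M *ᵥ z) ⬝ᵥ (M *ᵥ z) ≤ c * (z ⬝ᵥ z)) (w : Fin a → ℝ) :
    (Mᵀ *ᵥ w) ⬝ᵥ (Mᵀ *ᵥ w) ≤ c * (w ⬝ᵥ w) := by
  have h1 : (Mᵀ *ᵥ w) ⬝ᵥ (Mᵀ *ᵥ w) = w ⬝ᵥ (M *ᵥ (Mᵀ *ᵥ w)) := by
    rw [dmv, transpose_transpose]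
  have hs : ((Mᵀ *ᵥ w) ⬝ᵥ (Mᵀ *ᵥ w)) ^ 2 ≤
      (w ⬝ᵥ w) * ((M *ᵥ (Mᵀ *ᵥ w)) ⬝ᵥ (M *ᵥ (Mᵀ *ᵥ w))) := by
    rw [h1]; exact dot_sq_le w _
  have h3 : ((Mᵀ *ᵥ w) ⬝ᵥ (Mᵀ *ᵥ w)) ^ 2 ≤
      (w ⬝ᵥ w) * (c * ((Mᵀ *ᵥ w) ⬝ᵥ (Mᵀ *ᵥ w))) :=
    hs.trans (mul_le_mul_of_nonneg_left (hM _) (dot_self_nonneg' w))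
  rcases (dot_self_nonneg' (Mᵀ *ᵥ w)).eq_or_lt.imp_left Eq.symm with h | h
  · rw [h]; exact mul_nonneg hc (dot_self_nonneg' w)
  · nlinarith [dot_self_nonneg' w, h]

lemma gram_lower {a b : ℕ} (M : Matrix (Fin a) (Fin b) ℝ) (V : Matrix (Fin b) (Fin b) ℝ)
    (d : Fin b → ℝ) (cl : ℝ) (hV1 : Vᵀ * V = 1)
    (hG : Mᵀ * M = V * diagonal d * Vᵀ) (hd : ∀ i, cl ≤ d i) (hc : 0 ≤ cl)
    (z : Fin b → ℝ) :
    cl * ((M *ᵥ z) ⬝ᵥ (M *ᵥ z)) ≤ (Mᵀ *ᵥ (M *ᵥ z)) ⬝ᵥ (Mᵀ *ᵥ (M *ᵥ z)) := by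
  have h1 : (M *ᵥ z) ⬝ᵥ (M *ᵥ z) = (Vᵀ *ᵥ z) ⬝ᵥ (diagonal d *ᵥ (Vᵀ *ᵥ z)) := by
    rw [dmv, mulVec_mulVec, hG, ← mulVec_mulVec, ← mulVec_mulVec, dotProduct_comm,
      dmv, dotProduct_comm]
  have h2 : Mᵀ *ᵥ (M *ᵥ z) = V *ᵥ (diagonal d *ᵥ (Vᵀ *ᵥ z)) := by
    rw [mulVec_mulVec, hG, ← mulVec_mulVec, ← mulVec_mulVec]
  have vnorm : ∀ x : Fin b → ℝ, (V *ᵥ x) ⬝ᵥ (V *ᵥ x) = x ⬝ᵥ x := fun x => by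
    rw [dmv, mulVec_mulVec, hV1, one_mulVec]
  have h3 : (Mᵀ *ᵥ (M *ᵥ z)) ⬝ᵥ (Mᵀ *ᵥ (M *ᵥ z)) =
      (diagonal d *ᵥ (Vᵀ *ᵥ z)) ⬝ᵥ (diagonal d *ᵥ (Vᵀ *ᵥ z)) := by
    rw [h2]; exact vnorm _
  rw [h1, h3, dotProduct, dotProduct, Finset.mul_sum]
  refine Finset.sum_le_sum fun i _ => ?_
  rw [mulVec_diagonal]
  nlinarith [mul_nonneg (mul_nonneg (sub_nonneg.2 (hd i)) (hc.trans (hd i)))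
    (mul_self_nonneg ((Vᵀ *ᵥ z) i))]

lemma combine {m : ℕ} {a b : Fin m → ℝ} {α β : ℝ} (hα : 0 ≤ α) (hβ : 0 ≤ β)
    (ha : a ⬝ᵥ a ≤ α ^ 2) (hb : b ⬝ᵥ b ≤ β ^ 2) :
    (a + b) ⬝ᵥ (a + b) ≤ (α + β) ^ 2 := by
  have h1 : a ⬝ᵥ b ≤ α * β := by
    have hcs := dot_sq_le a b
    nlinarith [dot_self_nonneg' a, dot_self_nonneg' b, mul_nonneg hα hβ]
  have h2 : (a + b) ⬝ᵥ (a + b) = a ⬝ᵥ a + 2 * (a ⬝ᵥ b) + b ⬝ᵥ b := by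
    rw [add_dotProduct, dotProduct_add, dotProduct_add, dotProduct_comm b a]; ring
  rw [h2]; nlinarith

lemma surj_on_ker {n : ℕ} (Q M : Matrix (Fin (2*n)) (Fin n) ℝ)
    (hQ : Qᵀ * Q = 1) (hQM : Qᵀ * M = 0) (hdet : (Mᵀ * M).det ≠ 0)
    (w : Fin (2*n) → ℝ) (hw : Qᵀ *ᵥ w = 0) : ∃ z, M *ᵥ z = w := by
  have hrQ : Q.rank = n := by
    refine le_antisymm Q.rank_le_width ?_
    have h1 : (Qᵀ * Q).rank = Q.rank := Matrix.rank_transpose_mul_self Q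
    rw [hQ, Matrix.rank_one] at h1
    simp only [Fintype.card_fin] at h1
    omega
  have hrM : M.rank = n := by
    have h1 : (Mᵀ * M).rank = M.rank := Matrix.rank_transpose_mul_self M
    have h2 : (Mᵀ * M).rank = n := by
      rw [Matrix.rank_of_isUnit _ ((Matrix.isUnit_iff_isUnit_det _).2
        (isUnit_iff_ne_zero.2 hdet))]
      simp
    omega
  have hle : LinearMap.range M.mulVecLin ≤ LinearMap.ker Qᵀ.mulVecLin := by
    rintro x ⟨z, rfl⟩
    simp only [LinearMap.mem_ker, Matrix.mulVecLin_apply, Matrix.mulVec_mulVec, hQM,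
      Matrix.zero_mulVec]
  have hker : Module.finrank ℝ (LinearMap.ker Qᵀ.mulVecLin) = n := by
    have h1 := LinearMap.finrank_range_add_finrank_ker Qᵀ.mulVecLin
    have h2 : Module.finrank ℝ (LinearMap.range Qᵀ.mulVecLin) = n := by
      have h3 : Qᵀ.rank = n := by rw [Matrix.rank_transpose, hrQ]
      exact h3
    have h4 : Module.finrank ℝ (Fin (2*n) → ℝ) = 2*n := by simp
    rw [h2, h4] at h1
    omega
  have heq : LinearMap.range M.mulVecLin = LinearMap.ker Qᵀ.mulVecLin := by
    apply Submodule.eq_of_le_of_finrank_le hle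
    rw [hker]
    exact le_of_eq hrM.symm
  have hmem : w ∈ LinearMap.range M.mulVecLin := by
    rw [heq]
    exact LinearMap.mem_ker.2 (by rw [Matrix.mulVecLin_apply]; exact hw)
  obtain ⟨z, hz⟩ := hmem
  exact ⟨z, hz⟩

lemma mulVec_ite {m k : ℕ} (A : Matrix (Fin m) (Fin k) ℝ) (j : Fin m) :
    Aᵀ *ᵥ (fun i => if i = j then (1:ℝ) else 0) = fun p => A j p := by
  funext p
  simp [Matrix.mulVec, dotProduct, mul_ite, Finset.sum_ite_eq']

end Stmt6Aux

open Stmt6Aux in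
set_option maxHeartbeats 1000000 in
theorem stmt6 {n : ℕ} (hn : 0 < n)
    (A ΔA : Matrix (Fin (2 * n)) (Fin n) ℝ)
    (hA : A.rank = n) (hAD : (A + ΔA).rank = n)
    (Q Qt : Matrix (Fin (2 * n)) (Fin n) ℝ)
    (hQ : Qᵀ * Q = 1) (hQt : Qtᵀ * Qt = 1)
    (hrQ : LinearMap.range Q.mulVecLin = LinearMap.range A.mulVecLin)
    (hrQt : LinearMap.range Qt.mulVecLin = LinearMap.range (A + ΔA).mulVecLin)
    (U V : Matrix (Fin n) (Fin n) ℝ) (θ : Fin n → ℝ)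
    (hU1 : Uᵀ * U = 1) (hU2 : U * Uᵀ = 1) (hV1 : Vᵀ * V = 1) (hV2 : V * Vᵀ = 1)
    (hθ0 : ∀ i, 0 ≤ θ i) (hθ1 : ∀ i, θ i ≤ Real.pi / 2) (hmono : Monotone θ)
    (hsvd : Qᵀ * Qt = U * (Matrix.diagonal fun i => Real.cos (θ i)) * Vᵀ) :
    ∀ j, 1 - (Real.sin (θ ⟨n - 1, by omega⟩) * Real.sqrt (lev Q j)
          + Real.cos (θ ⟨0, hn⟩) * Real.sqrt (1 - lev Q j)) ^ 2 ≤ lev Qt j ∧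
      lev Qt j ≤ (Real.cos (θ ⟨0, hn⟩) * Real.sqrt (lev Q j)
          + Real.sin (θ ⟨n - 1, by omega⟩) * Real.sqrt (1 - lev Q j)) ^ 2 := by
  intro j
  have pi_pos := Real.pi_pos
  have hn' : n - 1 < n := by omega
  -- scalar facts
  have hcos_nonneg : ∀ i : Fin n, 0 ≤ Real.cos (θ i) := fun i =>
    Real.cos_nonneg_of_mem_Icc ⟨by linarith [hθ0 i], hθ1 i⟩
  have hsin_nonneg : ∀ i : Fin n, 0 ≤ Real.sin (θ i) := fun i =>
    Real.sin_nonneg_of_nonneg_of_le_pi (hθ0 i) (by linarith [hθ1 i])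
  have hcos_le : ∀ i : Fin n, Real.cos (θ i) ≤ Real.cos (θ ⟨0, hn⟩) := fun i =>
    Real.cos_le_cos_of_nonneg_of_le_pi (hθ0 _) (by linarith [hθ1 i])
      (hmono (by simp [Fin.le_def]))
  have hsin_le : ∀ i : Fin n, Real.sin (θ i) ≤ Real.sin (θ ⟨n-1, hn'⟩) := fun i => by
    have hm : θ i ≤ θ ⟨n-1, hn'⟩ := hmono (by rw [Fin.le_def]; exact Nat.le_pred_of_lt i.isLt)
    exact Real.strictMonoOn_sin.monotoneOn ⟨by linarith [hθ0 i], hθ1 i⟩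
      ⟨by linarith [hθ0 (⟨n-1, hn'⟩ : Fin n)], hθ1 _⟩ hm
  have hsin_ge : ∀ i : Fin n, Real.sin (θ ⟨0, hn⟩) ≤ Real.sin (θ i) := fun i => by
    have hm : θ ⟨0, hn⟩ ≤ θ i := hmono (by simp [Fin.le_def])
    exact Real.strictMonoOn_sin.monotoneOn
      ⟨by linarith [hθ0 (⟨0, hn⟩ : Fin n)], hθ1 _⟩ ⟨by linarith [hθ0 i], hθ1 i⟩ hm
  set c := Real.cos (θ ⟨0, hn⟩) with hc_def
  set s := Real.sin (θ ⟨n-1, hn'⟩) with hs_def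
  have hc0 : 0 ≤ c := hcos_nonneg _
  have hs0 : 0 ≤ s := hsin_nonneg _
  have hdcos : ∀ i : Fin n, Real.cos (θ i) ^ 2 ≤ c ^ 2 := fun i =>
    pow_le_pow_left₀ (hcos_nonneg i) (hcos_le i) 2
  have hdsin : ∀ i : Fin n, Real.sin (θ i) ^ 2 ≤ s ^ 2 := fun i =>
    pow_le_pow_left₀ (hsin_nonneg i) (hsin_le i) 2
  have hdsin0 : ∀ i : Fin n, Real.sin (θ ⟨0, hn⟩) ^ 2 ≤ Real.sin (θ i) ^ 2 := fun i =>
    pow_le_pow_left₀ (hsin_nonneg _) (hsin_ge i) 2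
  -- matrix identities
  have hQtQ : Qtᵀ * Q = V * (Matrix.diagonal fun i => Real.cos (θ i)) * Uᵀ := by
    have h := congrArg Matrix.transpose hsvd
    simpa [Matrix.transpose_mul, Matrix.transpose_transpose, Matrix.diagonal_transpose,
      Matrix.mul_assoc] using h
  have hG1 : (Qtᵀ * Q)ᵀ * (Qtᵀ * Q)
      = U * Matrix.diagonal (fun i => Real.cos (θ i) ^ 2) * Uᵀ := by
    rw [Matrix.transpose_mul, Matrix.transpose_transpose, hsvd, hQtQ,
      svd_gram U V _ hV1]
  have hP2 : (Q * Qᵀ) * (Q * Qᵀ) = Q * Qᵀ := by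
    calc (Q*Qᵀ)*(Q*Qᵀ) = Q * ((Qᵀ*Q) * Qᵀ) := by simp only [Matrix.mul_assoc]
      _ = Q*Qᵀ := by rw [hQ, Matrix.one_mul]
  have hPP : (1 - Q * Qᵀ) * (1 - Q * Qᵀ) = 1 - Q * Qᵀ := by
    calc (1 - Q*Qᵀ)*(1-Q*Qᵀ) = 1 - Q*Qᵀ - Q*Qᵀ + (Q*Qᵀ)*(Q*Qᵀ) := by noncomm_ring
      _ = 1 - Q*Qᵀ := by rw [hP2]; abel
  have hMt : ((1 - Q*Qᵀ) * Qt)ᵀ = Qtᵀ * (1 - Q*Qᵀ) := by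
    rw [Matrix.transpose_mul, Matrix.transpose_sub, Matrix.transpose_one,
      Matrix.transpose_mul, Matrix.transpose_transpose]
  have hsin_diag : (Matrix.diagonal fun i => 1 - Real.cos (θ i) ^ 2)
      = Matrix.diagonal (fun i => Real.sin (θ i) ^ 2) := by
    have h : (fun i : Fin n => 1 - Real.cos (θ i) ^ 2) = fun i => Real.sin (θ i) ^ 2 := by
      funext i; rw [Real.sin_sq]
    rw [h]
  have hG2 : ((1 - Q*Qᵀ) * Qt)ᵀ * ((1 - Q*Qᵀ) * Qt)
      = V * Matrix.diagonal (fun i => Real.sin (θ i) ^ 2) * Vᵀ := by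
    rw [hMt]
    have h1 : Qtᵀ * (1 - Q*Qᵀ) * ((1 - Q*Qᵀ) * Qt)
        = Qtᵀ * Qt - (Qtᵀ * Q) * (Qᵀ * Qt) := by
      calc Qtᵀ * (1 - Q*Qᵀ) * ((1 - Q*Qᵀ) * Qt)
          = Qtᵀ * (((1-Q*Qᵀ)*(1-Q*Qᵀ)) * Qt) := by simp only [Matrix.mul_assoc]
        _ = Qtᵀ * ((1 - Q*Qᵀ)*Qt) := by rw [hPP]
        _ = Qtᵀ * Qt - (Qtᵀ * Q) * (Qᵀ * Qt) := by
            rw [Matrix.sub_mul, Matrix.one_mul, Matrix.mul_sub]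
            simp only [Matrix.mul_assoc]
    rw [h1, hQt, hQtQ, hsvd, svd_gram V U _ hU1, sandwich V hV2, hsin_diag]
  have hPt2 : (Qt * Qtᵀ) * (Qt * Qtᵀ) = Qt * Qtᵀ := by
    calc (Qt*Qtᵀ)*(Qt*Qtᵀ) = Qt * ((Qtᵀ*Qt) * Qtᵀ) := by simp only [Matrix.mul_assoc]
      _ = Qt*Qtᵀ := by rw [hQt, Matrix.one_mul]
  have hPPt : (1 - Qt * Qtᵀ) * (1 - Qt * Qtᵀ) = 1 - Qt * Qtᵀ := by
    calc (1 - Qt*Qtᵀ)*(1-Qt*Qtᵀ) = 1 - Qt*Qtᵀ - Qt*Qtᵀ + (Qt*Qtᵀ)*(Qt*Qtᵀ) := by noncomm_ring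
      _ = 1 - Qt*Qtᵀ := by rw [hPt2]; abel
  set N : Matrix (Fin (2*n)) (Fin (2*n)) ℝ := 1 - Qt * Qtᵀ with hN_def
  have hNt : Nᵀ = N := by
    rw [hN_def, Matrix.transpose_sub, Matrix.transpose_one, Matrix.transpose_mul,
      Matrix.transpose_transpose]
  have hG3 : (N * Q)ᵀ * (N * Q)
      = U * Matrix.diagonal (fun i => Real.sin (θ i) ^ 2) * Uᵀ := by
    rw [Matrix.transpose_mul, hNt]
    have h1 : Qᵀ * N * (N * Q) = Qᵀ * Q - (Qᵀ * Qt) * (Qtᵀ * Q) := by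
      calc Qᵀ * N * (N * Q) = Qᵀ * ((N * N) * Q) := by simp only [Matrix.mul_assoc]
        _ = Qᵀ * (N * Q) := by rw [hN_def, hPPt]
        _ = Qᵀ * Q - (Qᵀ * Qt) * (Qtᵀ * Q) := by
            rw [hN_def, Matrix.sub_mul, Matrix.one_mul, Matrix.mul_sub]
            simp only [Matrix.mul_assoc]
    rw [h1, hQ, hsvd, hQtQ, svd_gram U V _ hV1, sandwich U hU2, hsin_diag]
  -- the vector computations
  set e : Fin (2*n) → ℝ := fun i => if i = j then 1 else 0 with he_def
  have hee : e ⬝ᵥ e = 1 := by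
    rw [he_def]; simp [dotProduct, ite_mul, Finset.sum_ite_eq']
  set y : Fin n → ℝ := Qᵀ *ᵥ e with hy_def
  have hy : y ⬝ᵥ y = lev Q j := by
    rw [hy_def, he_def, mulVec_ite]; simp [lev, dotProduct, pow_two]
  have hlevt : (Qtᵀ *ᵥ e) ⬝ᵥ (Qtᵀ *ᵥ e) = lev Qt j := by
    rw [he_def, mulVec_ite]; simp [lev, dotProduct, pow_two]
  set u : Fin (2*n) → ℝ := Q *ᵥ y with hu_def
  set w : Fin (2*n) → ℝ := e - u with hw_def
  have huu : u ⬝ᵥ u = y ⬝ᵥ y := by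
    rw [hu_def, dmv, mulVec_mulVec, hQ, one_mulVec]
  have heu : e ⬝ᵥ u = y ⬝ᵥ y := by
    rw [hu_def, dotProduct_comm, dmv, ← hy_def]
  have hww : w ⬝ᵥ w = 1 - lev Q j := by
    rw [hw_def, sub_dotProduct, dotProduct_sub, dotProduct_sub, dotProduct_comm u e,
      hee, heu, huu, hy]
    ring
  have hQw : Qᵀ *ᵥ w = 0 := by
    rw [hw_def, Matrix.mulVec_sub, hu_def, mulVec_mulVec, hQ, one_mulVec, ← hy_def,
      sub_self]
  have hl0 : 0 ≤ lev Q j := Finset.sum_nonneg fun _ _ => sq_nonneg _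
  have hl1 : lev Q j ≤ 1 := by
    have := dot_self_nonneg' w; rw [hww] at this; linarith
  set va : Fin n → ℝ := Qtᵀ *ᵥ u with hva_def
  set vb : Fin n → ℝ := Qtᵀ *ᵥ w with hvb_def
  have hab : Qtᵀ *ᵥ e = va + vb := by
    have h1 : u + w = e := by rw [hw_def]; abel
    rw [hva_def, hvb_def, ← Matrix.mulVec_add, h1]
  have hva : va ⬝ᵥ va ≤ c ^ 2 * lev Q j := by
    have h := gram_bound (Qtᵀ * Q) U _ (c^2) hU2 hG1 hdcos y
    rw [← mulVec_mulVec, ← hu_def, ← hva_def, hy] at h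
    exact h
  have hMbound := gram_bound ((1 - Q*Qᵀ) * Qt) V _ (s^2) hV2 hG2 hdsin
  have hMw : ((1 - Q*Qᵀ) * Qt)ᵀ *ᵥ w = vb := by
    rw [hMt, ← mulVec_mulVec]
    have h1 : (1 - Q*Qᵀ) *ᵥ w = w := by
      rw [Matrix.sub_mulVec, one_mulVec, ← mulVec_mulVec, hQw, Matrix.mulVec_zero,
        sub_zero]
    rw [h1, ← hvb_def]
  have hvb : vb ⬝ᵥ vb ≤ s ^ 2 * (1 - lev Q j) := by
    have h := adjoint_bound ((1 - Q*Qᵀ) * Qt) (s^2) (sq_nonneg s) hMbound w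
    rw [hMw, hww] at h
    exact h
  -- upper bound
  have hup : lev Qt j ≤ (c * Real.sqrt (lev Q j) + s * Real.sqrt (1 - lev Q j)) ^ 2 := by
    rw [← hlevt, hab]
    refine combine (mul_nonneg hc0 (Real.sqrt_nonneg _)) (mul_nonneg hs0 (Real.sqrt_nonneg _))
      ?_ ?_
    · calc va ⬝ᵥ va ≤ c ^ 2 * lev Q j := hva
        _ = (c * Real.sqrt (lev Q j)) ^ 2 := by
          rw [mul_pow, Real.sq_sqrt hl0]
    · calc vb ⬝ᵥ vb ≤ s ^ 2 * (1 - lev Q j) := hvb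
        _ = (s * Real.sqrt (1 - lev Q j)) ^ 2 := by
          rw [mul_pow, Real.sq_sqrt (by linarith : (0:ℝ) ≤ 1 - lev Q j)]
  -- lower bound
  have hNdot : ∀ x z : Fin (2*n) → ℝ, (N *ᵥ x) ⬝ᵥ (N *ᵥ z) = x ⬝ᵥ (N *ᵥ z) :=
    fun x z => by
      rw [dmv, mulVec_mulVec, hNt, hPPt]
  have hfe : (N *ᵥ e) ⬝ᵥ (N *ᵥ e) = 1 - lev Qt j := by
    rw [hNdot, hN_def, Matrix.sub_mulVec, one_mulVec, dotProduct_sub, ← mulVec_mulVec]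
    have h2 : e ⬝ᵥ (Qt *ᵥ (Qtᵀ *ᵥ e)) = lev Qt j := by
      rw [dotProduct_comm, dmv, hlevt]
    rw [h2, hee]
  have hg : (N *ᵥ u) ⬝ᵥ (N *ᵥ u) ≤ s ^ 2 * lev Q j := by
    have h := gram_bound (N * Q) U _ (s^2) hU2 hG3 hdsin y
    rw [← mulVec_mulVec, ← hu_def, hy] at h
    exact h
  have hhw : (N *ᵥ w) ⬝ᵥ (N *ᵥ w) = w ⬝ᵥ w - vb ⬝ᵥ vb := by
    rw [hNdot, hN_def, Matrix.sub_mulVec, one_mulVec, dotProduct_sub, ← mulVec_mulVec]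
    have h2 : w ⬝ᵥ (Qt *ᵥ (Qtᵀ *ᵥ w)) = vb ⬝ᵥ vb := by
      rw [dotProduct_comm, dmv, ← hvb_def]
    rw [h2]
  have hh : (N *ᵥ w) ⬝ᵥ (N *ᵥ w) ≤ c ^ 2 * (1 - lev Q j) := by
    by_cases h0 : Real.sin (θ ⟨0, hn⟩) = 0
    · have hpc : c ^ 2 = 1 := by
        have hpy := Real.sin_sq_add_cos_sq (θ ⟨0, hn⟩)
        rw [h0] at hpy
        rw [hc_def]
        nlinarith [hpy, sq_nonneg (Real.cos (θ ⟨0, hn⟩))]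
      rw [hhw, hww, hpc, one_mul]
      linarith [dot_self_nonneg' vb]
    · have hQM : Qᵀ * ((1 - Q*Qᵀ) * Qt) = 0 := by
        have h1 : Qᵀ * (1 - Q*Qᵀ) = 0 := by
          rw [Matrix.mul_sub, Matrix.mul_one, ← Matrix.mul_assoc, hQ, Matrix.one_mul,
            sub_self]
        rw [← Matrix.mul_assoc, h1, Matrix.zero_mul]
      have hs0pos : 0 < Real.sin (θ ⟨0, hn⟩) := (hsin_nonneg _).lt_of_ne (Ne.symm h0)
      have hdet : (((1 - Q*Qᵀ) * Qt)ᵀ * ((1 - Q*Qᵀ) * Qt)).det ≠ 0 := by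
        rw [hG2, Matrix.det_mul, Matrix.det_mul, Matrix.det_diagonal]
        have hVV : V.det * Vᵀ.det = 1 := by
          rw [← Matrix.det_mul, hV2, Matrix.det_one]
        have hVd : V.det ≠ 0 := fun h => by rw [h, zero_mul] at hVV; norm_num at hVV
        have hVtd : Vᵀ.det ≠ 0 := fun h => by rw [h, mul_zero] at hVV; norm_num at hVV
        have hprod : (∏ i, Real.sin (θ i) ^ 2) ≠ 0 :=
          Finset.prod_ne_zero_iff.2 fun i _ =>
            (pow_pos (lt_of_lt_of_le hs0pos (hsin_ge i)) 2).ne'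
        exact mul_ne_zero (mul_ne_zero hVd hprod) hVtd
      obtain ⟨z, hz⟩ := surj_on_ker Q ((1 - Q*Qᵀ) * Qt) hQ hQM hdet w hQw
      have hlow := gram_lower ((1 - Q*Qᵀ) * Qt) V _ (Real.sin (θ ⟨0, hn⟩) ^ 2) hV1 hG2
        hdsin0 (sq_nonneg _) z
      rw [hz, hMw] at hlow
      have hpc : c ^ 2 = 1 - Real.sin (θ ⟨0, hn⟩) ^ 2 := by
        have hpy := Real.sin_sq_add_cos_sq (θ ⟨0, hn⟩)
        rw [hc_def]; linarith
      rw [hhw, hww, hpc]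
      rw [hww] at hlow
      nlinarith [hlow]
  have hlow2 : 1 - lev Qt j ≤ (s * Real.sqrt (lev Q j) + c * Real.sqrt (1 - lev Q j)) ^ 2 := by
    rw [← hfe]
    have hsplit : N *ᵥ e = N *ᵥ u + N *ᵥ w := by
      have h1 : u + w = e := by rw [hw_def]; abel
      rw [← Matrix.mulVec_add, h1]
    rw [hsplit]
    refine combine (mul_nonneg hs0 (Real.sqrt_nonneg _))
      (mul_nonneg hc0 (Real.sqrt_nonneg _)) ?_ ?_
    · calc (N *ᵥ u) ⬝ᵥ (N *ᵥ u) ≤ s ^ 2 * lev Q j := hg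
        _ = (s * Real.sqrt (lev Q j)) ^ 2 := by rw [mul_pow, Real.sq_sqrt hl0]
    · calc (N *ᵥ w) ⬝ᵥ (N *ᵥ w) ≤ c ^ 2 * (1 - lev Q j) := hh
        _ = (c * Real.sqrt (1 - lev Q j)) ^ 2 := by
          rw [mul_pow, Real.sq_sqrt (by linarith : (0:ℝ) ≤ 1 - lev Q j)]
  exact ⟨by linarith [hlow2], hup⟩
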